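/- arXiv:2510.10598 — 2 statements merged into one kernel-verified Lean document; each statement's English description precedes it below -/
import Mathlib

section
/- For 0 < t < 1 with ρ := -log t, the sum ∑_{n≥1} (2n-1)² e^{(2n-1)ρ}/(e^{(2n-1)ρ} + 1)² equals π²/(12 ρ³) + O(1/ρ²) as ρ → 0⁺. -/
open Real MeasureTheory Set Filter

noncomputable def gg (x : ℝ) : ℝ := x^2 * Real.exp x / (Real.exp x + 1)^2
noncomputable def gg' (x : ℝ) : ℝ :=
  Real.exp x * (2*x*(Real.exp x + 1) + x^2*(1 - Real.exp x)) / (Real.exp x + 1)^3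
noncomputable def ph (x : ℝ) : ℝ := (2*x + x^2) * Real.exp (-x)

lemma hE (x : ℝ) : (0:ℝ) < Real.exp x + 1 := by positivity

lemma gg_deriv (x : ℝ) : HasDerivAt gg (gg' x) x := by
  have h1 : HasDerivAt (fun x : ℝ => x^2 * Real.exp x)
      (2*x * Real.exp x + x^2 * Real.exp x) x := by
    simpa [mul_comm] using ((hasDerivAt_pow 2 x).fun_mul (Real.hasDerivAt_exp x))
  have h2 : HasDerivAt (fun x : ℝ => (Real.exp x + 1)^2)
      (2*(Real.exp x + 1) * Real.exp x) x := by
    have := ((Real.hasDerivAt_exp x).add_const 1).fun_pow 2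
    simpa [mul_comm] using this
  have := h1.div h2 (by positivity)
  convert this using 1
  rfl
  rfl
  rfl
  unfold gg'
  have h3 : ((Real.exp x + 1)^2)^2 = (Real.exp x + 1)^4 := by ring
  rw [h3]
  have h4 : Real.exp x + 1 ≠ 0 := (hE x).ne'
  field_simp
  ring

lemma gg'_bound {x : ℝ} (hx : 0 ≤ x) : |gg' x| ≤ ph x := by
  have hE1 : (1:ℝ) ≤ Real.exp x := Real.one_le_exp hx
  have hEpos : (0:ℝ) < Real.exp x := Real.exp_pos x
  unfold gg' ph
  rw [abs_div, abs_of_pos (by positivity : (0:ℝ) < (Real.exp x + 1)^3)]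
  rw [div_le_iff₀ (by positivity)]
  have habs : |Real.exp x * (2*x*(Real.exp x + 1) + x^2*(1 - Real.exp x))|
      ≤ Real.exp x * (2*x*(Real.exp x + 1) + x^2*(Real.exp x - 1)) := by
    rw [abs_mul, abs_of_pos hEpos]
    gcongr
    have A : |2*x*(Real.exp x + 1)| = 2*x*(Real.exp x + 1) :=
      abs_of_nonneg (by nlinarith)
    have B : |x^2*(1 - Real.exp x)| = x^2*(Real.exp x - 1) := by
      rw [abs_mul, abs_of_nonneg (sq_nonneg x), abs_of_nonpos (by linarith)]
      ring
    calc |2*x*(Real.exp x + 1) + x^2*(1 - Real.exp x)|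
        ≤ |2*x*(Real.exp x + 1)| + |x^2*(1 - Real.exp x)| := abs_add_le _ _
      _ = 2*x*(Real.exp x + 1) + x^2*(Real.exp x - 1) := by rw [A, B]
  refine habs.trans ?_
  rw [Real.exp_neg, ← sub_nonneg]
  have hinv : (Real.exp x)⁻¹ * Real.exp x = 1 := inv_mul_cancel₀ hEpos.ne'
  set E := Real.exp x with hEdef
  have key : 0 ≤ ((2*x + x^2) * E⁻¹ * (E + 1)^3
      - E * (2*x*(E + 1) + x^2*(E - 1))) * E := by
    have expand : ((2*x + x^2) * E⁻¹ * (E + 1)^3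
        - E * (2*x*(E + 1) + x^2*(E - 1))) * E
        = (2*x + x^2) * ((E+1)^3) * (E⁻¹ * E) - E^2 * (2*x*(E+1) + x^2*(E-1)) := by ring
    rw [expand, hinv, mul_one]
    nlinarith [sq_nonneg E, sq_nonneg x, mul_nonneg hx (le_trans zero_le_one hE1),
      sq_nonneg (x*E), mul_nonneg (mul_nonneg hx hx) (le_trans zero_le_one hE1)]
  have := le_of_mul_le_mul_right (by linarith : 0 * E ≤ ((2*x + x^2) * E⁻¹ * (E + 1)^3
      - E * (2*x*(E + 1) + x^2*(E - 1))) * E) hEpos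
  linarith

lemma gg'_cont : Continuous gg' := by
  unfold gg'
  fun_prop (disch := intro x; positivity)

lemma ph_nonneg {x : ℝ} (hx : 0 ≤ x) : 0 ≤ ph x := by unfold ph; positivity

lemma gg_nonneg (x : ℝ) : 0 ≤ gg x := by unfold gg; positivity

lemma gg_cont : Continuous gg := by
  unfold gg
  fun_prop (disch := intro x; positivity)

lemma ph_cont : Continuous ph := by unfold ph; fun_prop

lemma ftc_bound {a b : ℝ} (ha : 0 ≤ a) (hab : a ≤ b) :
    |gg b - gg a| ≤ ∫ t in a..b, ph t := by
  have heq : gg b - gg a = ∫ t in a..b, gg' t :=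
    (intervalIntegral.integral_eq_sub_of_hasDerivAt (fun t _ => gg_deriv t)
      (gg'_cont.intervalIntegrable a b)).symm
  rw [heq]
  refine (intervalIntegral.abs_integral_le_integral_abs hab).trans ?_
  refine intervalIntegral.integral_mono_on hab
    (gg'_cont.abs.intervalIntegrable a b) (ph_cont.intervalIntegrable a b) ?_
  intro x hx
  exact gg'_bound (ha.trans hx.1)

lemma ph_int_nonneg {a b : ℝ} (ha : 0 ≤ a) (hab : a ≤ b) :
    0 ≤ ∫ t in a..b, ph t :=
  intervalIntegral.integral_nonneg hab (fun u hu => ph_nonneg (ha.trans hu.1))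

lemma ph_int_sub {l r a b : ℝ} (hl : 0 ≤ l) (h1 : l ≤ a) (h2 : a ≤ b) (h3 : b ≤ r) :
    (∫ t in a..b, ph t) ≤ ∫ t in l..r, ph t := by
  have i1 : IntervalIntegrable ph MeasureTheory.volume l a := ph_cont.intervalIntegrable l a
  have i2 : IntervalIntegrable ph MeasureTheory.volume a b := ph_cont.intervalIntegrable a b
  have i3 : IntervalIntegrable ph MeasureTheory.volume b r := ph_cont.intervalIntegrable b r
  have e1 : (∫ t in l..b, ph t) + ∫ t in b..r, ph t = ∫ t in l..r, ph t :=
    intervalIntegral.integral_add_adjacent_intervals (ph_cont.intervalIntegrable l b) i3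
  have e2 : (∫ t in l..a, ph t) + ∫ t in a..b, ph t = ∫ t in l..b, ph t :=
    intervalIntegral.integral_add_adjacent_intervals i1 i2
  have n1 := ph_int_nonneg hl h1
  have n3 := ph_int_nonneg (hl.trans (h1.trans h2)) h3
  linarith

lemma osc {l r m x : ℝ} (hl : 0 ≤ l) (h1 : l ≤ m) (h2 : m ≤ r) (h3 : l ≤ x) (h4 : x ≤ r) :
    |gg x - gg m| ≤ ∫ t in l..r, ph t := by
  rcases le_total m x with h | h
  · exact (ftc_bound (hl.trans h1) h).trans (ph_int_sub hl h1 h h4)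
  · rw [abs_sub_comm]
    exact (ftc_bound (hl.trans h3) h).trans (ph_int_sub hl h3 h h2)

lemma interval_est {l r m : ℝ} (hl : 0 ≤ l) (h1 : l ≤ m) (h2 : m ≤ r) :
    |(∫ t in l..r, gg t) - (r - l) * gg m| ≤ (r - l) * ∫ t in l..r, ph t := by
  have hlr : l ≤ r := h1.trans h2
  have h5 : (∫ t in l..r, gg t) - (r - l) * gg m = ∫ t in l..r, (gg t - gg m) := by
    rw [intervalIntegral.integral_sub (gg_cont.intervalIntegrable _ _)
      (intervalIntegrable_const), intervalIntegral.integral_const, smul_eq_mul]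
  rw [h5]
  refine (intervalIntegral.abs_integral_le_integral_abs hlr).trans ?_
  have step : (∫ t in l..r, |gg t - gg m|) ≤ ∫ t in l..r, (∫ s in l..r, ph s) := by
    refine intervalIntegral.integral_mono_on hlr
      ((gg_cont.sub continuous_const).abs.intervalIntegrable l r)
      (intervalIntegrable_const) ?_
    intro x hx
    exact osc hl h1 h2 hx.1 hx.2
  refine step.trans ?_
  rw [intervalIntegral.integral_const, smul_eq_mul]

lemma int_pow_exp (n : ℕ) {c : ℝ} (hc : 0 < c) :
    IntegrableOn (fun x : ℝ => x ^ n * Real.exp (-(c * x))) (Ioi 0) := by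
  have hs : (-1:ℝ) < (n:ℝ) := lt_of_lt_of_le (by norm_num) (Nat.cast_nonneg n)
  have h := integrableOn_rpow_mul_exp_neg_mul_rpow hs zero_lt_one hc
  have heq : (fun x : ℝ => x ^ ((n:ℕ):ℝ) * Real.exp (-c * x ^ (1:ℝ)))
      = fun x : ℝ => x ^ n * Real.exp (-(c * x)) := by
    funext x
    rw [Real.rpow_natCast, Real.rpow_one, neg_mul]
  rwa [heq] at h

lemma int_val (n : ℕ) {c : ℝ} (hc : 0 < c) :
    ∫ x in Ioi 0, x ^ n * Real.exp (-(c * x)) = (Nat.factorial n : ℝ) / c ^ (n+1) := by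
  have h := Real.integral_rpow_mul_exp_neg_mul_Ioi
    (by positivity : (0:ℝ) < (n:ℝ) + 1) hc
  have h2 : ∀ x ∈ Ioi (0:ℝ), x ^ ((n:ℝ) + 1 - 1) * Real.exp (-(c * x))
      = x ^ n * Real.exp (-(c * x)) := by
    intro x _
    rw [add_sub_cancel_right, Real.rpow_natCast]
  rw [setIntegral_congr_fun measurableSet_Ioi h2] at h
  have h3 : ((n:ℝ) + 1) = ((n + 1 : ℕ) : ℝ) := by push_cast; ring
  rw [h, h3, Real.rpow_natCast, ← h3, Real.Gamma_nat_eq_factorial, div_pow, one_pow]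
  ring

lemma ph_integrable : IntegrableOn ph (Ioi 0) := by
  have h1 := (int_pow_exp 1 one_pos).const_mul 2
  have h2 := int_pow_exp 2 one_pos
  refine (h1.add h2).congr (Filter.Eventually.of_forall fun x => ?_)
  show 2 * (x ^ 1 * Real.exp (-(1 * x))) + x ^ 2 * Real.exp (-(1 * x)) = ph x
  unfold ph
  rw [one_mul, pow_one]
  ring

lemma ph_integral : ∫ x in Ioi 0, ph x = 4 := by
  have h1 := (int_pow_exp 1 one_pos).const_mul 2
  have h2 := int_pow_exp 2 one_pos
  have heq : ∀ x ∈ Ioi (0:ℝ), ph x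
      = 2 * (x ^ 1 * Real.exp (-(1 * x))) + x ^ 2 * Real.exp (-(1 * x)) := by
    intro x _
    unfold ph
    rw [one_mul, pow_one]
    ring
  rw [setIntegral_congr_fun measurableSet_Ioi heq, integral_add h1 h2, integral_const_mul,
    int_val 1 one_pos, int_val 2 one_pos]
  norm_num [Nat.factorial]

lemma gg_integrable : IntegrableOn gg (Ioi 0) := by
  refine Integrable.mono (int_pow_exp 2 one_pos) gg_cont.aestronglyMeasurable.restrict ?_
  filter_upwards [ae_restrict_mem measurableSet_Ioi] with x hx
  have hx0 : (0:ℝ) < x := hx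
  have hEpos := Real.exp_pos x
  rw [Real.norm_eq_abs, Real.norm_eq_abs, abs_of_nonneg (gg_nonneg x),
    abs_of_nonneg (by positivity : (0:ℝ) ≤ x ^ 2 * Real.exp (-(1*x)))]
  unfold gg
  rw [one_mul, Real.exp_neg, div_le_iff₀ (by positivity)]
  have h1 : Real.exp x ≤ Real.exp x + 1 := by linarith
  calc x^2 * Real.exp x ≤ x^2 * (Real.exp x)⁻¹ * (Real.exp x + 1)^2 := ?_
    _ = _ := by ring
  have : x^2 * Real.exp x = x^2 * (Real.exp x)⁻¹ * (Real.exp x)^2 := by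
    field_simp
  rw [this]
  gcongr

lemma hasSum_partition {f : ℝ → ℝ} (hc : Continuous f) (hnn : ∀ x, 0 ≤ x → 0 ≤ f x)
    (hint : IntegrableOn f (Ioi 0)) {ρ : ℝ} (hρ : 0 < ρ) :
    HasSum (fun n : ℕ => ∫ t in (2*(n:ℝ)*ρ)..(2*((n:ℝ)+1)*ρ), f t) (∫ x in Ioi 0, f x) := by
  have hmono : ∀ n : ℕ, 2*(n:ℝ)*ρ ≤ 2*((n:ℝ)+1)*ρ := by
    intro n
    nlinarith [hρ]
  have hnn0 : ∀ n : ℕ, (0:ℝ) ≤ 2*(n:ℝ)*ρ := by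
    intro n
    positivity
  rw [hasSum_iff_tendsto_nat_of_nonneg]
  · have key : ∀ N : ℕ, ∑ i ∈ Finset.range N, (∫ t in (2*(i:ℝ)*ρ)..(2*((i:ℝ)+1)*ρ), f t)
        = ∫ t in (0:ℝ)..(2*(N:ℝ)*ρ), f t := by
      intro N
      have h := intervalIntegral.sum_integral_adjacent_intervals
        (a := fun n : ℕ => 2*(n:ℝ)*ρ) (n := N) (f := f) (μ := MeasureTheory.volume)
        (fun k _ => hc.intervalIntegrable _ _)
      simp only [Nat.cast_zero, mul_zero, zero_mul] at h
      rw [← h]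
      apply Finset.sum_congr rfl
      intro i _
      push_cast
      ring_nf
    have h2 : Filter.Tendsto (fun N : ℕ => 2*(N:ℝ)*ρ) atTop atTop := by
      have h3 := tendsto_natCast_atTop_atTop (R := ℝ).atTop_mul_const (by positivity : (0:ℝ) < 2*ρ)
      have : (fun N : ℕ => (N:ℝ) * (2*ρ)) = fun N : ℕ => 2*(N:ℝ)*ρ := by
        funext N
        ring
      rwa [this] at h3
    have h4 := intervalIntegral_tendsto_integral_Ioi 0 hint h2
    exact (Filter.Tendsto.congr (fun N => (key N).symm) h4)
  · intro n
    exact intervalIntegral.integral_nonneg (hmono n) (fun u hu => hnn u ((hnn0 n).trans hu.1))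

lemma hasSum_shift : HasSum (fun n : ℕ => (1:ℝ)/((n:ℝ)+1)^2) (π^2/6) := by
  have h0 : HasSum (fun n : ℕ => (1:ℝ)/(n:ℝ)^2) (π^2/6) := hasSum_zeta_two
  have := (hasSum_nat_add_iff (f := fun n : ℕ => (1:ℝ)/(n:ℝ)^2) 1).mpr (by simpa using h0)
  convert this using 2 with n
  rfl
  push_cast
  ring

lemma hasSum_even_inv_sq : HasSum (fun j : ℕ => (1:ℝ)/((2*(j:ℝ))^2)) (π^2/24) := by
  have h0 : HasSum (fun n : ℕ => (1:ℝ)/(n:ℝ)^2) (π^2/6) := hasSum_zeta_two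
  have h1 := h0.mul_left (1/4)
  have h2 : (π^2/24 : ℝ) = 1/4 * (π^2/6) := by ring
  rw [h2]
  convert h1 using 2 with j
  rfl
  rcases eq_or_ne j 0 with rfl | hj
  · simp
  · have : ((j:ℝ)) ≠ 0 := Nat.cast_ne_zero.mpr hj
    field_simp
    ring

lemma hasSum_odd_inv_sq : HasSum (fun j : ℕ => (1:ℝ)/((2*(j:ℝ)+1)^2)) (π^2/8) := by
  set f : ℕ → ℝ := fun n : ℕ => (1:ℝ)/(n:ℝ)^2 with hf
  have h0 : HasSum f (π^2/6) := hasSum_zeta_two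
  have heven : HasSum (fun j : ℕ => f (2*j)) (π^2/24) := by
    convert hasSum_even_inv_sq using 2 with j
    rw [hf]
    push_cast
    ring
  have hinj : Function.Injective (fun j : ℕ => 2*j+1) := by
    intro a b hab
    simpa using hab
  have hsummable : Summable (fun j : ℕ => f (2*j+1)) :=
    h0.summable.comp_injective (i := fun j : ℕ => 2*j+1) hinj
  obtain ⟨b, hb⟩ := hsummable
  have hall : HasSum f (π^2/24 + b) := HasSum.even_add_odd heven hb
  have huniq := hall.unique h0
  have hbval : b = π^2/8 := by linarith
  rw [hbval] at hb
  convert hb using 2 with j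
  rw [hf]
  push_cast
  ring

lemma alt_sum : HasSum (fun k : ℕ => (-1:ℝ)^k / ((k:ℝ)+1)^2) (π^2/12) := by
  set f : ℕ → ℝ := fun k : ℕ => (-1:ℝ)^k / ((k:ℝ)+1)^2 with hf
  have he : HasSum (fun j : ℕ => f (2*j)) (π^2/8) := by
    convert hasSum_odd_inv_sq using 2 with j
    show (-1:ℝ)^(2*j) / (((2*j : ℕ):ℝ)+1)^2 = 1/(2*(j:ℝ)+1)^2
    have hpow : (-1:ℝ)^(2*j) = 1 := by
      rw [pow_mul]
      norm_num
    rw [hpow]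
    push_cast
    ring
  have ho : HasSum (fun j : ℕ => f (2*j+1)) (-(π^2/24)) := by
    have h1 := (hasSum_shift.mul_left (1/4)).neg
    have h2 : (-(π^2/24) : ℝ) = -(1/4 * (π^2/6)) := by ring
    rw [h2]
    convert h1 using 2 with j
    show (-1:ℝ)^(2*j+1) / (((2*j+1 : ℕ):ℝ)+1)^2 = -(1/4 * (1/((j:ℝ)+1)^2))
    have hpow : (-1:ℝ)^(2*j+1) = -1 := by
      rw [pow_succ, pow_mul]
      norm_num
    rw [hpow]
    push_cast
    field_simp
    ring
    rfl
  have hall : HasSum f (π^2/8 + -(π^2/24)) := HasSum.even_add_odd he ho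
  convert hall using 1
  ring

lemma gg_series {x : ℝ} (hx : 0 < x) :
    HasSum (fun k : ℕ => (-1:ℝ)^k * ((k:ℝ)+1) * (x^2 * Real.exp (-(((k:ℝ)+1) * x))))
      (gg x) := by
  set y := Real.exp (-x) with hy
  have hy0 : 0 < y := Real.exp_pos _
  have hy1 : y < 1 := by
    rw [hy, Real.exp_lt_one_iff]
    linarith
  have hr : ‖-y‖ < 1 := by
    rw [norm_neg, Real.norm_eq_abs, abs_of_pos hy0]
    exact hy1
  have h := hasSum_coe_mul_geometric_of_norm_lt_one hr
  have hsh := (hasSum_nat_add_iff (f := fun n : ℕ => (n:ℝ) * (-y)^n) 1).mpr (by simpa using h)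
  have h2 := hsh.mul_left (-(x^2))
  have hfun : (fun k : ℕ => (-1:ℝ)^k * ((k:ℝ)+1) * (x^2 * Real.exp (-(((k:ℝ)+1) * x))))
      = fun k : ℕ => -(x^2) * ((((k+1:ℕ)):ℝ) * (-y)^(k+1)) := by
    funext k
    have hexp : Real.exp (-(((k:ℝ)+1) * x)) = y^(k+1) := by
      rw [hy, ← Real.exp_nat_mul]
      congr 1
      push_cast
      ring
    rw [hexp, neg_pow y (k+1), pow_succ (-1:ℝ) k]
    push_cast
    ring
  have hval : gg x = -(x^2) * ((-y)/(1+y)^2) := by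
    unfold gg
    rw [hy, Real.exp_neg]
    have h3 : Real.exp x ≠ 0 := (Real.exp_pos x).ne'
    have h4 : Real.exp x + 1 ≠ 0 := by positivity
    have h5 : 1 + (Real.exp x)⁻¹ ≠ 0 := by positivity
    field_simp
  rw [hfun, hval]
  exact h2

lemma gg_integral : ∫ x in Ioi 0, gg x = π^2/6 := by
  set F : ℕ → ℝ → ℝ :=
    fun k x => (-1:ℝ)^k * ((k:ℝ)+1) * (x^2 * Real.exp (-(((k:ℝ)+1) * x))) with hF
  have hc : ∀ k : ℕ, (0:ℝ) < (k:ℝ)+1 := fun k => by positivity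
  have hFint : ∀ k, Integrable (F k) (volume.restrict (Ioi 0)) := fun k =>
    (int_pow_exp 2 (hc k)).const_mul ((-1:ℝ)^k * ((k:ℝ)+1))
  have hnorm : ∀ k, ∫ x in Ioi 0, ‖F k x‖ = 2/((k:ℝ)+1)^2 := by
    intro k
    have habs : ∀ x ∈ Ioi (0:ℝ), ‖F k x‖
        = ((k:ℝ)+1) * (x^2 * Real.exp (-(((k:ℝ)+1)*x))) := by
      intro x hx
      rw [hF]
      simp only [Real.norm_eq_abs, abs_mul, abs_pow, abs_neg, abs_one, one_pow, one_mul]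
      rw [abs_of_pos (hc k), sq_abs, abs_of_pos (Real.exp_pos _)]
    rw [setIntegral_congr_fun measurableSet_Ioi habs, integral_const_mul, int_val 2 (hc k)]
    have hne : ((k:ℝ)+1) ≠ 0 := (hc k).ne'
    have hfac : (Nat.factorial 2 : ℝ) = 2 := by norm_num [Nat.factorial]
    rw [hfac]
    field_simp
  have hsum : Summable (fun k => ∫ x in Ioi 0, ‖F k x‖) := by
    refine ((hasSum_shift.summable).mul_left 2).congr (fun k => ?_)
    rw [hnorm k]
    ring
  have key := MeasureTheory.hasSum_integral_of_summable_integral_norm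
    (μ := volume.restrict (Ioi 0)) hFint hsum
  have hFval : ∀ k, ∫ x in Ioi 0, F k x = 2*((-1:ℝ)^k/((k:ℝ)+1)^2) := by
    intro k
    rw [hF]
    rw [integral_const_mul, int_val 2 (hc k)]
    have hne : ((k:ℝ)+1) ≠ 0 := (hc k).ne'
    have hfac : (Nat.factorial 2 : ℝ) = 2 := by norm_num [Nat.factorial]
    rw [hfac]
    field_simp
  have halt : HasSum (fun k : ℕ => 2*((-1:ℝ)^k/((k:ℝ)+1)^2)) (π^2/6) := by
    have := alt_sum.mul_left 2
    convert this using 1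
    rfl
    ring
  have hfe : (fun k => ∫ x in Ioi 0, F k x) = fun k : ℕ => 2*((-1:ℝ)^k/((k:ℝ)+1)^2) :=
    funext hFval
  rw [hfe] at key
  have hval := halt.unique key
  have hcong : ∫ x in Ioi 0, (∑' k, F k x) = ∫ x in Ioi 0, gg x :=
    setIntegral_congr_fun measurableSet_Ioi (fun x hx => (gg_series hx).tsum_eq)
  rw [← hcong, ← hval]

/-- The variance `σ²_Q(t) = ∑_{n≥1} (2n-1)² e^{(2n-1)ρ}/(e^{(2n-1)ρ}+1)²` with `t = e^{-ρ}`
equals `π²/(12ρ³) + O(1/ρ²)` as `ρ → 0⁺`. -/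
theorem stmt_8 :
    ∃ C > (0:ℝ), ∃ ρ₀ > (0:ℝ), ∀ ρ : ℝ, 0 < ρ → ρ < ρ₀ →
      |(∑' n : ℕ, (2 * (n:ℝ) + 1)^2 * Real.exp ((2 * (n:ℝ) + 1) * ρ) /
          (Real.exp ((2 * (n:ℝ) + 1) * ρ) + 1)^2) - π^2 / (12 * ρ^3)| ≤ C / ρ^2 := by
  refine ⟨4, by norm_num, 1, by norm_num, fun ρ hρ _ => ?_⟩
  have hρne : ρ ≠ 0 := hρ.ne'
  have hb0 := hasSum_partition gg_cont (fun x _ => gg_nonneg x) gg_integrable hρ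
  rw [gg_integral] at hb0
  have hc0 := hasSum_partition ph_cont (fun x hx => ph_nonneg hx) ph_integrable hρ
  rw [ph_integral] at hc0
  set b : ℕ → ℝ := fun n => ∫ t in (2*(n:ℝ)*ρ)..(2*((n:ℝ)+1)*ρ), gg t with hbdef
  set c : ℕ → ℝ := fun n => ∫ t in (2*(n:ℝ)*ρ)..(2*((n:ℝ)+1)*ρ), ph t with hcdef
  set a : ℕ → ℝ := fun n => gg ((2*(n:ℝ)+1)*ρ) with hadef
  have hanonneg : ∀ n, 0 ≤ a n := fun n => gg_nonneg _
  have hper : ∀ n, |2*ρ*a n - b n| ≤ 2*ρ*c n := by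
    intro n
    have h1 : (0:ℝ) ≤ 2*(n:ℝ)*ρ := by positivity
    have h2 : 2*(n:ℝ)*ρ ≤ (2*(n:ℝ)+1)*ρ := by nlinarith
    have h3 : (2*(n:ℝ)+1)*ρ ≤ 2*((n:ℝ)+1)*ρ := by nlinarith
    have h := interval_est h1 h2 h3
    have hlen : 2*((n:ℝ)+1)*ρ - 2*(n:ℝ)*ρ = 2*ρ := by ring
    rw [hlen] at h
    rw [abs_sub_comm]
    exact h
  have hcsum2 : Summable (fun n => 2*ρ*c n) := hc0.summable.mul_left (2*ρ)
  have h2a : Summable (fun n => 2*ρ*a n) := by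
    refine Summable.of_nonneg_of_le
      (fun n => mul_nonneg (by positivity) (hanonneg n)) (fun n => ?_)
      (hb0.summable.add hcsum2)
    have h4 := hper n
    have h5 := le_abs_self (2*ρ*a n - b n)
    linarith
  have hasum : Summable a := by
    refine (h2a.mul_left (1/(2*ρ))).congr (fun n => ?_)
    field_simp
  have habs : Summable (fun n => |2*ρ*a n - b n|) :=
    Summable.of_nonneg_of_le (fun n => abs_nonneg _) hper hcsum2
  have hts : ∑' n, (2*ρ*a n - b n) = 2*ρ*(∑' n, a n) - π^2/6 := by
    rw [Summable.tsum_sub h2a hb0.summable, hb0.tsum_eq, tsum_mul_left]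
  have hbound : |2*ρ*(∑' n, a n) - π^2/6| ≤ 8*ρ := by
    rw [← hts]
    have step1 : |∑' n, (2*ρ*a n - b n)| ≤ ∑' n, |2*ρ*a n - b n| := by
      rw [← Real.norm_eq_abs]
      refine (norm_tsum_le_tsum_norm ?_)
      simpa [Real.norm_eq_abs] using habs
    refine step1.trans ((Summable.tsum_le_tsum hper habs hcsum2).trans ?_)
    rw [tsum_mul_left, hc0.tsum_eq]
    linarith
  have hterm : (fun n : ℕ => (2*(n:ℝ)+1)^2 * Real.exp ((2*(n:ℝ)+1)*ρ) /
      (Real.exp ((2*(n:ℝ)+1)*ρ)+1)^2) = fun n => (1/ρ^2) * a n := by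
    funext n
    have hrfl : a n = ((2*(n:ℝ)+1)*ρ)^2 * Real.exp ((2*(n:ℝ)+1)*ρ) /
        (Real.exp ((2*(n:ℝ)+1)*ρ)+1)^2 := rfl
    rw [hrfl]
    have hEne : (Real.exp ((2*(n:ℝ)+1)*ρ) + 1) ≠ 0 := (hE _).ne'
    field_simp
  rw [hterm, tsum_mul_left]
  have hX : |(∑' n, a n) - π^2/(12*ρ)| ≤ 4 := by
    have key : 2*ρ*((∑' n, a n) - π^2/(12*ρ)) = 2*ρ*(∑' n, a n) - π^2/6 := by
      field_simp
      ring
    have := hbound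
    rw [← key, abs_mul, abs_of_pos (by positivity : (0:ℝ) < 2*ρ)] at this
    nlinarith [abs_nonneg ((∑' n, a n) - π^2/(12*ρ))]
  have hsplit : (1/ρ^2) * (∑' n, a n) - π^2/(12*ρ^3)
      = (1/ρ^2) * ((∑' n, a n) - π^2/(12*ρ)) := by
    field_simp
  rw [hsplit, abs_mul, abs_of_pos (by positivity : (0:ℝ) < 1/ρ^2)]
  rw [div_eq_mul_inv (4:ℝ), mul_comm (4:ℝ)]
  calc 1/ρ^2 * |(∑' n, a n) - π^2/(12*ρ)| ≤ 1/ρ^2 * 4 := by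
        gcongr
    _ = (ρ^2)⁻¹ * 4 := by rw [one_div]
end

section
/- As λ → 0⁺, log ∏_{n≥1}(1 + e^{-2nλ}) = π²/(24λ) - (1/2) log 2 + O(λ). -/
open Real MeasureTheory Set Filter Topology intervalIntegral

noncomputable def ff (a t : ℝ) : ℝ := Real.log (1 + Real.exp (-(a * t)))
noncomputable def ff' (a t : ℝ) : ℝ := -(a * Real.exp (-(a * t)) / (1 + Real.exp (-(a * t))))

lemma one_add_exp_pos (x : ℝ) : 0 < 1 + Real.exp x := by positivity

lemma ff_nonneg (a t : ℝ) : 0 ≤ ff a t :=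
  Real.log_nonneg (by nlinarith [Real.exp_pos (-(a*t))])

lemma ff_le (a t : ℝ) : ff a t ≤ Real.exp (-(a * t)) := by
  have h := Real.log_le_sub_one_of_pos (one_add_exp_pos (-(a*t)))
  simpa [ff] using h

lemma hasDerivAt_ff (a t : ℝ) : HasDerivAt (ff a) (ff' a t) t := by
  have h1 : HasDerivAt (fun t : ℝ => -(a * t)) (-a) t := by
    simpa using ((hasDerivAt_id t).const_mul a).fun_neg
  have h2 : HasDerivAt (fun t : ℝ => Real.exp (-(a * t))) (Real.exp (-(a*t)) * (-a)) t :=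
    (Real.hasDerivAt_exp _).comp t h1
  have h3 : HasDerivAt (fun t : ℝ => 1 + Real.exp (-(a * t))) (Real.exp (-(a*t)) * (-a)) t :=
    h2.const_add 1
  have h4 := (Real.hasDerivAt_log (x := 1 + Real.exp (-(a*t))) (by positivity)).comp t h3
  refine h4.congr_deriv ?_
  unfold ff'
  rw [div_eq_mul_inv]
  ring

lemma continuous_exp_term (a : ℝ) : Continuous (fun t : ℝ => Real.exp (-(a * t))) :=
  Real.continuous_exp.comp ((continuous_const.mul continuous_id).neg)

lemma continuous_ff (a : ℝ) : Continuous (ff a) :=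
  ((continuous_const.add (continuous_exp_term a))).log (fun t => (one_add_exp_pos _).ne')

lemma continuous_ff' (a : ℝ) : Continuous (ff' a) :=
  (((continuous_const.mul (continuous_exp_term a)).div
    (continuous_const.add (continuous_exp_term a)) (fun t => (one_add_exp_pos _).ne'))).neg

lemma ff'_eq (a t : ℝ) : ff' a t = -(a / (Real.exp (a * t) + 1)) := by
  unfold ff'
  rw [Real.exp_neg]
  have h := (Real.exp_pos (a*t)).ne'
  field_simp

lemma ff'_mono (a : ℝ) (ha : 0 ≤ a) : Monotone (ff' a) := by
  intro s t hst
  rw [ff'_eq, ff'_eq]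
  have h1 : Real.exp (a * s) + 1 ≤ Real.exp (a * t) + 1 := by
    have := Real.exp_le_exp.mpr (mul_le_mul_of_nonneg_left hst ha)
    linarith
  have h2 : 0 < Real.exp (a * s) + 1 := by positivity
  exact neg_le_neg (div_le_div_of_nonneg_left ha h2 h1)

lemma ff'_nonpos (a t : ℝ) (ha : 0 ≤ a) : ff' a t ≤ 0 := by
  rw [ff'_eq]
  have h2 : 0 < Real.exp (a * t) + 1 := by positivity
  have := div_nonneg ha h2.le
  linarith

lemma ff'_zero (a : ℝ) : ff' a 0 = -(a/2) := by
  rw [ff'_eq]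
  norm_num


lemma trap_eq (a x : ℝ) :
    ∫ t in x..(x+1), ff a t =
      (ff a x + ff a (x+1))/2 - ∫ t in x..(x+1), (t - (x + 1/2)) * ff' a t := by
  have hu : ∀ t ∈ uIcc x (x+1), HasDerivAt (fun t : ℝ => t - (x+1/2)) 1 t := fun t _ => by
    simpa using (hasDerivAt_id t).sub_const (x+1/2)
  have hv : ∀ t ∈ uIcc x (x+1), HasDerivAt (ff a) (ff' a t) t := fun t _ => hasDerivAt_ff a t
  have h := intervalIntegral.integral_mul_deriv_eq_deriv_mul hu hv
    ((continuous_const).intervalIntegrable x (x+1))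
    ((continuous_ff' a).intervalIntegrable x (x+1))
  simp only [one_mul] at h
  have e1 : x + 1 - (x + 1/2) = 1/2 := by ring
  have e2 : x - (x + 1/2) = -(1/2) := by ring
  rw [e1, e2] at h
  linarith [h]

lemma integral_linear_zero (x c : ℝ) : ∫ t in x..(x+1), (t - (x + 1/2)) * c = 0 := by
  have heq : (fun t : ℝ => (t - (x + 1/2)) * c) = fun t : ℝ => c * (t - (x+1/2)) := by
    funext t; ring
  rw [heq, intervalIntegral.integral_const_mul,
    intervalIntegral.integral_comp_sub_right (fun t => t) (x+1/2), integral_id]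
  ring

lemma trap_err_bounds (a x : ℝ) (ha : 0 ≤ a) :
    0 ≤ (∫ t in x..(x+1), (t - (x + 1/2)) * ff' a t) ∧
    (∫ t in x..(x+1), (t - (x + 1/2)) * ff' a t) ≤ (ff' a (x+1) - ff' a x)/2 := by
  set m := x + 1/2 with hm
  have hx1 : x ≤ x + 1 := by linarith
  have hint1 : IntervalIntegrable (fun t => (t - m) * ff' a t) volume x (x+1) :=
    (((continuous_id.sub continuous_const)).mul (continuous_ff' a)).intervalIntegrable _ _
  have hint2 : IntervalIntegrable (fun t => (t - m) * (ff' a t - ff' a m)) volume x (x+1) :=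
    (((continuous_id.sub continuous_const)).mul ((continuous_ff' a).sub continuous_const)).intervalIntegrable _ _
  have key : (∫ t in x..(x+1), (t - m) * ff' a t)
      = ∫ t in x..(x+1), (t - m) * (ff' a t - ff' a m) := by
    have h0 := integral_linear_zero x (ff' a m)
    have hsub : (fun t : ℝ => (t - m) * (ff' a t - ff' a m))
        = fun t => (t - m) * ff' a t - (t - m) * ff' a m := by funext t; ring
    have hint3 : IntervalIntegrable (fun t : ℝ => (t - m) * ff' a m) volume x (x+1) :=
      (((continuous_id.sub continuous_const)).mul continuous_const).intervalIntegrable _ _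
    rw [hsub, intervalIntegral.integral_sub hint1 hint3, h0, sub_zero]
  have hmono := ff'_mono a ha
  have hpt1 : ∀ t ∈ Icc x (x+1), 0 ≤ (t - m) * (ff' a t - ff' a m) := by
    intro t ht
    rcases le_total t m with h | h
    · have := hmono h; nlinarith
    · exact mul_nonneg (by linarith) (sub_nonneg.mpr (hmono h))
  have hpt2 : ∀ t ∈ Icc x (x+1), (t - m) * (ff' a t - ff' a m) ≤ (ff' a (x+1) - ff' a x)/2 := by
    intro t ht
    have hx2 : ff' a x ≤ ff' a m := hmono (by rw [hm]; linarith)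
    have hx3 : ff' a m ≤ ff' a (x+1) := hmono (by rw [hm]; linarith)
    rcases le_total t m with h | h
    · have h1 : m - t ≤ 1/2 := by simp only [hm] at *; linarith [ht.1]
      have h2 : ff' a m - ff' a t ≤ ff' a (x+1) - ff' a x := by
        have := hmono ht.1; linarith
      have := mul_le_mul h1 h2 (by simpa using sub_nonneg.mpr (hmono h)) (by norm_num)
      nlinarith
    · have h1 : t - m ≤ 1/2 := by simp only [hm] at *; linarith [ht.2]
      have h2 : ff' a t - ff' a m ≤ ff' a (x+1) - ff' a x := by
        have := hmono ht.2; linarith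
      have := mul_le_mul h1 h2 (sub_nonneg.mpr (hmono h)) (by norm_num)
      nlinarith
  constructor
  · rw [key]
    exact intervalIntegral.integral_nonneg hx1 (fun t ht => hpt1 t ht)
  · rw [key]
    calc (∫ t in x..(x+1), (t - m) * (ff' a t - ff' a m))
        ≤ ∫ _ in x..(x+1), (ff' a (x+1) - ff' a x)/2 :=
          intervalIntegral.integral_mono_on hx1 hint2 (continuous_const.intervalIntegrable _ _) hpt2
      _ = (ff' a (x+1) - ff' a x)/2 := by simp

lemma partial_sum_bounds (a : ℝ) (ha : 0 ≤ a) (N : ℕ) :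
    ((∫ t in (0:ℝ)..N, ff a t) - (ff a 0 - ff a N)/2 ≤ ∑ n ∈ Finset.range N, ff a ((n:ℝ)+1)) ∧
    (∑ n ∈ Finset.range N, ff a ((n:ℝ)+1) ≤
      (∫ t in (0:ℝ)..N, ff a t) - (ff a 0 - ff a N)/2 + (ff' a N - ff' a 0)/2) := by
  have hsplit : ∑ n ∈ Finset.range N, (∫ t in (n:ℝ)..((n:ℝ)+1), ff a t)
      = ∫ t in (0:ℝ)..N, ff a t := by
    have h := intervalIntegral.sum_integral_adjacent_intervals
      (a := fun k : ℕ => (k:ℝ)) (f := ff a) (n := N) (μ := volume)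
      (fun k _ => (continuous_ff a).intervalIntegrable _ _)
    simp only [Nat.cast_add, Nat.cast_one, Nat.cast_zero] at h
    simpa using h
  have hE : ∀ n : ℕ,
      ((∫ t in (n:ℝ)..((n:ℝ)+1), ff a t) ≤ (ff a n + ff a ((n:ℝ)+1))/2) ∧
      ((ff a n + ff a ((n:ℝ)+1))/2 - (ff' a ((n:ℝ)+1) - ff' a n)/2
        ≤ ∫ t in (n:ℝ)..((n:ℝ)+1), ff a t) := by
    intro n
    have h1 := trap_eq a n
    have h2 := trap_err_bounds a n ha
    exact ⟨by linarith [h2.1], by linarith [h2.2]⟩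
  have hsum1 : (∫ t in (0:ℝ)..N, ff a t)
      ≤ ∑ n ∈ Finset.range N, (ff a n + ff a ((n:ℝ)+1))/2 := by
    rw [← hsplit]
    exact Finset.sum_le_sum fun n _ => (hE n).1
  have hsum2 : ∑ n ∈ Finset.range N, ((ff a n + ff a ((n:ℝ)+1))/2 - (ff' a ((n:ℝ)+1) - ff' a n)/2)
      ≤ ∫ t in (0:ℝ)..N, ff a t := by
    rw [← hsplit]
    exact Finset.sum_le_sum fun n _ => (hE n).2
  have htel1 : ∑ n ∈ Finset.range N, (ff' a ((n:ℝ)+1) - ff' a n) = ff' a N - ff' a 0 := by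
    have h := Finset.sum_range_sub (f := fun k : ℕ => ff' a k) N
    simp only [Nat.cast_add, Nat.cast_one, Nat.cast_zero] at h
    simpa using h
  have htel2 : ∑ n ∈ Finset.range N, (ff a n / 2 - ff a ((n:ℝ)+1) / 2) = ff a 0 / 2 - ff a N / 2 := by
    have h := Finset.sum_range_sub' (f := fun k : ℕ => ff a k / 2) N
    simp only [Nat.cast_add, Nat.cast_one, Nat.cast_zero] at h
    simpa using h
  have hTS : ∑ n ∈ Finset.range N, (ff a n + ff a ((n:ℝ)+1))/2
      - ∑ n ∈ Finset.range N, ff a ((n:ℝ)+1) = ff a 0 / 2 - ff a N / 2 := by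
    rw [← Finset.sum_sub_distrib, ← htel2]
    exact Finset.sum_congr rfl fun n _ => by ring
  have hsum2' : ∑ n ∈ Finset.range N, ((ff a n + ff a ((n:ℝ)+1))/2 - (ff' a ((n:ℝ)+1) - ff' a n)/2)
      = ∑ n ∈ Finset.range N, (ff a n + ff a ((n:ℝ)+1))/2 - (ff' a N - ff' a 0)/2 := by
    rw [Finset.sum_sub_distrib, ← htel1, Finset.sum_div]
  rw [hsum2'] at hsum2
  constructor <;> linarith

lemma hasSum_basel_shift : HasSum (fun n : ℕ => 1/((n:ℝ)+1)^2) (π^2/6) := by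
  have h := (hasSum_nat_add_iff (f := fun n : ℕ => 1/(n:ℝ)^2) 1).mpr
    (by simpa using hasSum_zeta_two)
  simp only [Nat.cast_add, Nat.cast_one] at h
  simpa using h

lemma hasSum_eta2 : HasSum (fun k : ℕ => (-1)^k / ((k:ℝ)+1)^2) (π^2/12) := by
  have hb := hasSum_basel_shift
  have ho : HasSum (fun n : ℕ => 1/((2*(n:ℝ)+1)+1)^2) (π^2/24) := by
    have h : HasSum (fun n : ℕ => 1/((n:ℝ)+1)^2/4) (π^2/6/4) := hb.div_const 4
    have e1 : (π^2/6/4 : ℝ) = π^2/24 := by ring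
    have e2 : (fun n : ℕ => 1/((n:ℝ)+1)^2/4) = fun n : ℕ => 1/((2*(n:ℝ)+1)+1)^2 := by
      funext n
      have e : (2*(n:ℝ)+1)+1 = 2*((n:ℝ)+1) := by ring
      rw [div_div, e, mul_pow]
      ring
    rw [e1, e2] at h
    exact h
  set o : ℕ → ℝ := fun m => if Odd m then 1/((m:ℝ)+1)^2 else 0 with ho_def
  have hinj : Function.Injective (fun n : ℕ => 2*n+1) := by
    intro a b h
    dsimp only at h
    omega
  have hvanish : ∀ m ∉ Set.range (fun n : ℕ => 2*n+1), o m = 0 := by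
    intro m hm
    have hodd : ¬ Odd m := by
      intro ⟨j, hj⟩
      exact hm ⟨j, by dsimp only; omega⟩
    simp [ho_def, hodd]
  have hcomp : HasSum (o ∘ (fun n : ℕ => 2*n+1)) (π^2/24) := by
    have e : (o ∘ (fun n : ℕ => 2*n+1)) = fun n : ℕ => 1/((2*(n:ℝ)+1)+1)^2 := by
      funext n
      have hodd : Odd (2*n+1) := ⟨n, by omega⟩
      simp only [Function.comp_apply, ho_def, if_pos hodd]
      push_cast
      ring_nf
    rw [e]
    exact ho
  have hO : HasSum o (π^2/24) := (Function.Injective.hasSum_iff hinj hvanish).mp hcomp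
  have hfinal := hb.sub (hO.mul_left 2)
  have heq : (fun k : ℕ => 1/((k:ℝ)+1)^2 - 2 * o k) = fun k : ℕ => (-1)^k / ((k:ℝ)+1)^2 := by
    funext k
    rcases Nat.even_or_odd k with hk | hk
    · have hodd : ¬ Odd k := by simpa [Nat.not_odd_iff_even] using hk
      simp [ho_def, hodd, hk.neg_one_pow]
    · simp only [ho_def, if_pos hk, hk.neg_one_pow]
      ring
  have e3 : (π^2/6 - 2*(π^2/24) : ℝ) = π^2/12 := by ring
  rw [heq, e3] at hfinal
  exact hfinal

lemma integrable_exp_term (c : ℝ) (hc : 0 < c) :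
    IntegrableOn (fun u : ℝ => Real.exp (-(c*u))) (Ioi 0) := by
  simpa [neg_mul] using exp_neg_integrableOn_Ioi 0 hc

lemma integral_exp_term (c : ℝ) (hc : 0 < c) : ∫ u in Ioi (0:ℝ), Real.exp (-(c*u)) = 1/c := by
  have h := integral_comp_mul_left_Ioi (fun u => Real.exp (-u)) 0 hc
  simp only [mul_zero, integral_exp_neg_Ioi_zero, smul_eq_mul, mul_one] at h
  rw [h, one_div]

lemma integrableOn_ff (a : ℝ) (ha : 0 < a) : IntegrableOn (ff a) (Ioi 0) := by
  apply Integrable.mono (integrable_exp_term a ha) ((continuous_ff a).aestronglyMeasurable)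
  filter_upwards with t
  rw [Real.norm_of_nonneg (ff_nonneg a t), Real.norm_of_nonneg (Real.exp_pos _).le]
  exact ff_le a t

lemma integral_J : ∫ u in Ioi (0:ℝ), Real.log (1 + Real.exp (-u)) = π^2/12 := by
  set F : ℕ → ℝ → ℝ := fun k u => ((-1)^k/((k:ℝ)+1)) * Real.exp (-(((k:ℝ)+1)*u)) with hF
  have hkpos : ∀ k : ℕ, (0:ℝ) < (k:ℝ)+1 := fun k => by positivity
  have hFk_int : ∀ k : ℕ, Integrable (F k) (volume.restrict (Ioi 0)) := fun k =>
    (integrable_exp_term ((k:ℝ)+1) (hkpos k)).const_mul _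
  have hFk_norm : ∀ k : ℕ, (∫ u in Ioi (0:ℝ), ‖F k u‖) = (1/((k:ℝ)+1)) * (1/((k:ℝ)+1)) := by
    intro k
    have hnorm : ∀ u : ℝ, ‖F k u‖ = (1/((k:ℝ)+1)) * Real.exp (-(((k:ℝ)+1)*u)) := by
      intro u
      rw [hF]
      rw [Real.norm_eq_abs, abs_mul, abs_div, abs_pow, abs_neg, abs_one, one_pow,
        abs_of_pos (hkpos k), abs_of_pos (Real.exp_pos _)]
    simp_rw [hnorm]
    rw [MeasureTheory.integral_const_mul, integral_exp_term _ (hkpos k)]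
  have hsumnorm : Summable (fun k : ℕ => ∫ u in Ioi (0:ℝ), ‖F k u‖) := by
    apply Summable.congr (f := fun k : ℕ => 1/((k:ℝ)+1)^2) hasSum_basel_shift.summable
    intro k
    rw [hFk_norm k, div_mul_div_comm, one_mul, sq]
  have key := MeasureTheory.integral_tsum_of_summable_integral_norm hFk_int hsumnorm
  have hpt : ∀ u ∈ Ioi (0:ℝ), (∑' k, F k u) = Real.log (1 + Real.exp (-u)) := by
    intro u hu
    have he1 : Real.exp (-u) < 1 := Real.exp_lt_one_iff.mpr (by simpa using hu)
    have habs : |(-Real.exp (-u))| < 1 := by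
      rw [abs_neg, abs_of_pos (Real.exp_pos _)]; exact he1
    have hs := (hasSum_pow_div_log_of_abs_lt_one habs).neg
    rw [neg_neg, sub_neg_eq_add] at hs
    have heq : (fun n : ℕ => -((-Real.exp (-u))^(n+1)/((n:ℝ)+1))) = fun n : ℕ => F n u := by
      funext n
      show -((-Real.exp (-u))^(n+1)/((n:ℝ)+1))
        = ((-1)^n/((n:ℝ)+1)) * Real.exp (-(((n:ℝ)+1)*u))
      rw [show -(((n:ℝ)+1)*u) = ((n+1 : ℕ) : ℝ) * (-u) by push_cast; ring,
        Real.exp_nat_mul, neg_pow, pow_succ (-1 : ℝ)]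
      ring
    rw [heq] at hs
    exact hs.tsum_eq
  have h1 : ∫ u in Ioi (0:ℝ), Real.log (1 + Real.exp (-u)) = ∫ u in Ioi (0:ℝ), ∑' k, F k u :=
    MeasureTheory.setIntegral_congr_fun measurableSet_Ioi (fun u hu => (hpt u hu).symm)
  have h2 : ∀ k : ℕ, (∫ u in Ioi (0:ℝ), F k u) = (-1)^k/((k:ℝ)+1)^2 := by
    intro k
    rw [hF]
    rw [MeasureTheory.integral_const_mul, integral_exp_term _ (hkpos k)]
    rw [div_mul_div_comm, mul_one, sq]
  rw [h1, ← key, tsum_congr h2]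
  exact hasSum_eta2.tsum_eq

lemma integral_ff (a : ℝ) (ha : 0 < a) : ∫ t in Ioi (0:ℝ), ff a t = π^2/12/a := by
  have h := integral_comp_mul_left_Ioi (fun u => Real.log (1 + Real.exp (-u))) 0 ha
  simp only [mul_zero, integral_J, smul_eq_mul] at h
  have : (fun x : ℝ => Real.log (1 + Real.exp (-(a * x)))) = ff a := rfl
  rw [this] at h
  rw [h]
  rw [div_div]
  rw [inv_mul_eq_div, div_eq_div_iff (by positivity) (by positivity)]
  ring

lemma summable_gg (a : ℝ) (ha : 0 < a) : Summable (fun n : ℕ => ff a ((n:ℝ)+1)) := by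
  have hlt : Real.exp (-a) < 1 := Real.exp_lt_one_iff.mpr (by linarith)
  apply Summable.of_nonneg_of_le (f := fun n : ℕ => Real.exp (-a)^n)
    (fun n => ff_nonneg _ _) (fun n => ?_)
    (summable_geometric_of_lt_one (Real.exp_nonneg _) hlt)
  calc ff a ((n:ℝ)+1) ≤ Real.exp (-(a*((n:ℝ)+1))) := ff_le _ _
    _ = Real.exp (-a)^(n+1) := by
        rw [← Real.exp_nat_mul]; congr 1; push_cast; ring
    _ ≤ Real.exp (-a)^n := pow_le_pow_of_le_one (Real.exp_nonneg _) hlt.le (by omega)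

lemma log_tprod (a : ℝ) (ha : 0 < a) :
    Real.log (∏' n : ℕ, (1 + Real.exp (-(a*((n:ℝ)+1))))) = ∑' n : ℕ, ff a ((n:ℝ)+1) := by
  have hs := summable_gg a ha
  have hp := hs.hasSum.rexp
  have he : (rexp ∘ fun n : ℕ => ff a ((n:ℝ)+1)) = fun n : ℕ => 1 + Real.exp (-(a*((n:ℝ)+1))) := by
    funext n
    exact Real.exp_log (one_add_exp_pos _)
  rw [he] at hp
  rw [hp.tprod_eq, Real.log_exp]

/-- `log ∏_{n≥1}(1+e^{-2nλ}) = π²/(24λ) - (1/2) log 2 + O(λ)` as `λ → 0⁺`. -/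
theorem stmt_10 :
    ∃ C > (0:ℝ), ∃ Λ > (0:ℝ), ∀ lam : ℝ, 0 < lam → lam < Λ →
      |Real.log (∏' n : ℕ, (1 + Real.exp (-(2 * ((n:ℝ) + 1)) * lam)))
        - (π^2 / (24 * lam) - (1/2) * Real.log 2)| ≤ C * lam := by
  refine ⟨1, one_pos, 1, one_pos, fun lam hlam _ => ?_⟩
  set a := 2 * lam with ha_def
  have ha : 0 < a := by positivity
  have hterm : (fun n : ℕ => 1 + Real.exp (-(2*((n:ℝ)+1))*lam))
      = fun n : ℕ => 1 + Real.exp (-(a*((n:ℝ)+1))) := by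
    funext n; rw [ha_def]; ring_nf
  have hlog : Real.log (∏' n : ℕ, (1 + Real.exp (-(2*((n:ℝ)+1))*lam)))
      = ∑' n : ℕ, ff a ((n:ℝ)+1) := by
    rw [hterm]; exact log_tprod a ha
  set S := ∑' n : ℕ, ff a ((n:ℝ)+1) with hS_def
  have hS : Tendsto (fun N => ∑ n ∈ Finset.range N, ff a ((n:ℝ)+1)) atTop (𝓝 S) :=
    (summable_gg a ha).hasSum.tendsto_sum_nat
  have hI : Tendsto (fun N : ℕ => ∫ t in (0:ℝ)..N, ff a t) atTop (𝓝 (π^2/12/a)) := by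
    have h := MeasureTheory.intervalIntegral_tendsto_integral_Ioi 0
      (integrableOn_ff a ha) tendsto_natCast_atTop_atTop
    rwa [integral_ff a ha] at h
  have hexpN : Tendsto (fun N : ℕ => Real.exp (-(a*N))) atTop (𝓝 0) := by
    have he : (fun N : ℕ => Real.exp (-(a*N))) = fun N : ℕ => Real.exp (-a)^N := by
      funext N; rw [← Real.exp_nat_mul]; congr 1; ring
    rw [he]
    exact tendsto_pow_atTop_nhds_zero_of_lt_one (Real.exp_nonneg _)
      (Real.exp_lt_one_iff.mpr (by linarith))
  have hfN : Tendsto (fun N : ℕ => ff a N) atTop (𝓝 0) :=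
    squeeze_zero (fun n => ff_nonneg _ _) (fun n => ff_le _ _) hexpN
  have hf'N : Tendsto (fun N : ℕ => ff' a N) atTop (𝓝 0) := by
    have hb : ∀ n : ℕ, ‖ff' a n‖ ≤ a * Real.exp (-(a*(n:ℝ))) := by
      intro n
      rw [Real.norm_eq_abs, ff', abs_neg, abs_of_nonneg (by positivity)]
      exact div_le_self (by positivity) (by nlinarith [Real.exp_pos (-(a*(n:ℝ)))])
    exact squeeze_zero_norm hb (by simpa using hexpN.const_mul a)
  have hlower : π^2/12/a - (ff a 0 - 0)/2 ≤ S :=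
    le_of_tendsto_of_tendsto' (hI.sub ((tendsto_const_nhds.sub hfN).div_const 2)) hS
      (fun N => (partial_sum_bounds a ha.le N).1)
  have hupper : S ≤ π^2/12/a - (ff a 0 - 0)/2 + ((0:ℝ) - ff' a 0)/2 :=
    le_of_tendsto_of_tendsto' hS
      ((hI.sub ((tendsto_const_nhds.sub hfN).div_const 2)).add
        ((hf'N.sub tendsto_const_nhds).div_const 2))
      (fun N => (partial_sum_bounds a ha.le N).2)
  have hff0 : ff a 0 = Real.log 2 := by
    unfold ff; norm_num
  have hff'0 : ff' a 0 = -(a/2) := ff'_zero a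
  have hIval : π^2/12/a = π^2/(24*lam) := by
    rw [ha_def]; field_simp; ring
  rw [hlog]
  rw [hff0] at hlower hupper
  rw [hff'0] at hupper
  rw [hIval] at hlower hupper
  have ha2 : a = 2 * lam := ha_def
  rw [abs_le]
  constructor <;> [linarith; linarith]
end
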